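/- Fix real parameters σ > 0, γ > 0, g > 0 and η ≠ 0; set ω = σγη and β = 2σ²/g, and define v(t) = cosh(ωt) + (β/ω)sinh(ωt) and D(t) = (1/(2γ²))·(t·v(t) − sinh(ωt)/ω − 2β(cosh(ωt) − 1)/ω²)/v(t) (this is the damping exponent in the case δq = p₀ = 0). Then as t → 0 the function t ↦ D(t) − (σ²η²/6)·t³ is O(t⁴), i.e. D(t) = (σ²η²/6)·t³ + O(t⁴). -/

import Mathlib

lemma cosh_taylor (x : ℝ) (hx : |x| ≤ 1) : |Real.cosh x - (1 + x^2/2)| ≤ x^4 := by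
  have h1 := Real.exp_bound hx (n := 4) (by norm_num)
  have hx' : |(-x)| ≤ 1 := by rwa [abs_neg]
  have h2 := Real.exp_bound hx' (n := 4) (by norm_num)
  simp only [Finset.sum_range_succ, Finset.sum_range_zero] at h1 h2
  norm_num [Nat.factorial] at h1 h2
  have h2' : |Real.exp (-x) - (1 - x + x^2/2 - x^3/6)| ≤ |x|^4 * (5/96) := by
    convert h2 using 2; ring
  have key : Real.cosh x - (1 + x^2/2) =
      ((Real.exp x - (1 + x + x^2/2 + x^3/6)) + (Real.exp (-x) - (1 - x + x^2/2 - x^3/6))) / 2 := by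
    rw [Real.cosh_eq]; ring
  have habs : |x|^4 = x^4 := by
    rw [← abs_pow]; exact abs_of_nonneg (by positivity)
  rw [key, abs_div, abs_two]
  have h3 := abs_add_le (Real.exp x - (1 + x + x^2/2 + x^3/6)) (Real.exp (-x) - (1 - x + x^2/2 - x^3/6))
  nlinarith [abs_nonneg (Real.exp x - (1 + x + x^2/2 + x^3/6))]

lemma sinh_taylor (x : ℝ) (hx : |x| ≤ 1) : |Real.sinh x - (x + x^3/6)| ≤ x^4 := by
  have h1 := Real.exp_bound hx (n := 4) (by norm_num)
  have hx' : |(-x)| ≤ 1 := by rwa [abs_neg]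
  have h2 := Real.exp_bound hx' (n := 4) (by norm_num)
  simp only [Finset.sum_range_succ, Finset.sum_range_zero] at h1 h2
  norm_num [Nat.factorial] at h1 h2
  have h2' : |Real.exp (-x) - (1 - x + x^2/2 - x^3/6)| ≤ |x|^4 * (5/96) := by
    convert h2 using 2; ring
  have key : Real.sinh x - (x + x^3/6) =
      ((Real.exp x - (1 + x + x^2/2 + x^3/6)) - (Real.exp (-x) - (1 - x + x^2/2 - x^3/6))) / 2 := by
    rw [Real.sinh_eq]; ring
  have habs : |x|^4 = x^4 := by
    rw [← abs_pow]; exact abs_of_nonneg (by positivity)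
  rw [key, abs_div, abs_two]
  have h3 := abs_sub (Real.exp x - (1 + x + x^2/2 + x^3/6)) (Real.exp (-x) - (1 - x + x^2/2 - x^3/6))
  nlinarith [abs_nonneg (Real.exp x - (1 + x + x^2/2 + x^3/6))]

lemma sinh_taylor1 (x : ℝ) (hx : |x| ≤ 1) : |Real.sinh x - x| ≤ |x|^3 := by
  have h1 := Real.exp_bound hx (n := 3) (by norm_num)
  have hx' : |(-x)| ≤ 1 := by rwa [abs_neg]
  have h2 := Real.exp_bound hx' (n := 3) (by norm_num)
  simp only [Finset.sum_range_succ, Finset.sum_range_zero] at h1 h2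
  norm_num [Nat.factorial] at h1 h2
  have h2' : |Real.exp (-x) - (1 - x + x^2/2)| ≤ |x|^3 * (2/9) := by
    convert h2 using 2; ring
  have key : Real.sinh x - x =
      ((Real.exp x - (1 + x + x^2/2)) - (Real.exp (-x) - (1 - x + x^2/2))) / 2 := by
    rw [Real.sinh_eq]; ring
  rw [key, abs_div, abs_two]
  have h3 := abs_sub (Real.exp x - (1 + x + x^2/2)) (Real.exp (-x) - (1 - x + x^2/2))
  nlinarith [abs_nonneg (Real.exp x - (1 + x + x^2/2)), abs_nonneg x, pow_nonneg (abs_nonneg x) 3]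


lemma E_bound (ω β t : ℝ) (hω : ω ≠ 0) (hx1 : |ω*t| ≤ 1) (ht1 : |t| ≤ 1) :
    |t * (Real.cosh (ω*t) + (β/ω) * Real.sinh (ω*t)) - Real.sinh (ω*t)/ω
       - 2*β*(Real.cosh (ω*t)-1)/ω^2
       - ω^2*t^3/3 * (Real.cosh (ω*t) + (β/ω) * Real.sinh (ω*t))|
    ≤ (ω^4 + |ω|^3 + ω^4/6 + ω^6/3 + |β/ω| * 4 * |ω|^3) * t^4 := by
  have habsω : 0 < |ω| := abs_pos.2 hω
  set C := Real.cosh (ω*t) with hC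
  set S := Real.sinh (ω*t) with hS
  have hEc : |C - (1 + (ω*t)^2/2)| ≤ ω^4*t^4 := by
    have := cosh_taylor (ω*t) hx1
    rwa [show ((ω*t)^4 : ℝ) = ω^4*t^4 from by ring] at this
  have hEs : |S - (ω*t + (ω*t)^3/6)| ≤ ω^4*t^4 := by
    have := sinh_taylor (ω*t) hx1
    rwa [show ((ω*t)^4 : ℝ) = ω^4*t^4 from by ring] at this
  have hEs3 : |S - ω*t| ≤ |ω|^3* |t|^3 := by
    have := sinh_taylor1 (ω*t) hx1
    rwa [abs_mul, mul_pow] at this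
  have hSb : |S| ≤ 2*(|ω| * |t|) := by
    have h1 : |S| ≤ |S - ω*t| + |ω*t| := by
      calc |S| = |(S - ω*t) + ω*t| := by ring_nf
      _ ≤ |S - ω*t| + |ω*t| := abs_add_le _ _
    have h2 : |ω|^3* |t|^3 ≤ |ω| * |t| := by
      have : |ω*t|^3 ≤ |ω*t| := by
        have h3 := pow_le_pow_of_le_one (abs_nonneg (ω*t)) hx1 (show 1 ≤ 3 by norm_num)
        simpa using h3
      rwa [abs_mul, mul_pow] at this
    rw [abs_mul] at h1
    linarith
  have ht4 : |t|^4 = t^4 := by rw [← abs_pow]; exact abs_of_nonneg (by positivity)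
  have hw4 : |ω|^4 = ω^4 := by rw [← abs_pow]; exact abs_of_nonneg (by positivity)
  have hid : t * (C + (β/ω) * S) - S/ω - 2*β*(C-1)/ω^2 - ω^2*t^3/3 * (C + (β/ω) * S)
      = t*(C - (1 + (ω*t)^2/2)) - (S - (ω*t + (ω*t)^3/6))/ω - ω^4*t^5/6
        - ω^2*t^3/3*(C - (1 + (ω*t)^2/2))
        + (β/ω)*(t*(S - ω*t) - 2*(C - (1 + (ω*t)^2/2))/ω - ω^2*t^3/3*S) := by
    field_simp
    ring
  rw [hid]
  -- bound each term
  have b1 : |t*(C - (1 + (ω*t)^2/2))| ≤ ω^4*t^4 := by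
    rw [abs_mul]
    calc |t| * |C - (1 + (ω*t)^2/2)| ≤ 1 * (ω^4*t^4) := by
          apply mul_le_mul ht1 hEc (abs_nonneg _) zero_le_one
    _ = ω^4*t^4 := one_mul _
  have b2 : |(S - (ω*t + (ω*t)^3/6))/ω| ≤ |ω|^3*t^4 := by
    rw [abs_div, div_le_iff₀ habsω]
    calc |S - (ω*t + (ω*t)^3/6)| ≤ ω^4*t^4 := hEs
    _ = |ω|^3*t^4* |ω| := by rw [show (|ω|^3*t^4* |ω| : ℝ) = |ω|^4*t^4 from by ring, hw4]
  have b3 : |ω^4*t^5/6| ≤ ω^4/6*t^4 := by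
    have h5 : |ω^4*t^5/6| = ω^4/6*(|t| *t^4) := by
      rw [abs_div, abs_mul, abs_of_nonneg (show (0:ℝ) ≤ ω^4 by positivity), abs_pow,
        show |t|^5 = |t| * |t|^4 from by ring, ht4]
      norm_num
      ring
    rw [h5]
    calc ω^4/6*(|t| *t^4) ≤ ω^4/6*(1*t^4) := by
          apply mul_le_mul_of_nonneg_left _ (by positivity)
          apply mul_le_mul_of_nonneg_right ht1 (by positivity)
    _ = ω^4/6*t^4 := by ring
  have b4 : |ω^2*t^3/3*(C - (1 + (ω*t)^2/2))| ≤ ω^6/3*t^4 := by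
    rw [abs_mul]
    have hq : |ω^2*t^3/3| = ω^2* |t|^3/3 := by
      rw [abs_div, abs_mul, abs_of_nonneg (show (0:ℝ) ≤ ω^2 by positivity), abs_pow]
      norm_num
    rw [hq]
    have ht3 : |t|^3 ≤ 1 := pow_le_one₀ (abs_nonneg t) ht1
    calc ω^2* |t|^3/3 * |C - (1 + (ω*t)^2/2)| ≤ ω^2*1/3 * (ω^4*t^4) := by
          apply mul_le_mul _ hEc (abs_nonneg _) (by positivity)
          apply div_le_div_of_nonneg_right ?_ (by norm_num)
          · exact mul_le_mul_of_nonneg_left ht3 (by positivity)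
    _ = ω^6/3*t^4 := by ring
  have b5 : |t*(S - ω*t)| ≤ |ω|^3*t^4 := by
    rw [abs_mul]
    calc |t| * |S - ω*t| ≤ |t| * (|ω|^3* |t|^3) :=
          mul_le_mul_of_nonneg_left hEs3 (abs_nonneg t)
    _ = |ω|^3*(|t|^4) := by ring
    _ = |ω|^3*t^4 := by rw [ht4]
  have b6 : |2*(C - (1 + (ω*t)^2/2))/ω| ≤ 2* |ω|^3*t^4 := by
    rw [abs_div, abs_mul, abs_two, div_le_iff₀ habsω]
    calc 2 * |C - (1 + (ω*t)^2/2)| ≤ 2 * (ω^4*t^4) := by linarith [hEc]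
    _ = 2* |ω|^3*t^4* |ω| := by rw [show (2* |ω|^3*t^4* |ω| : ℝ) = 2*(|ω|^4*t^4) from by ring, hw4]
  have b7 : |ω^2*t^3/3*S| ≤ 2/3* |ω|^3*t^4 := by
    rw [abs_mul]
    have hq : |ω^2*t^3/3| = ω^2* |t|^3/3 := by
      rw [abs_div, abs_mul, abs_of_nonneg (show (0:ℝ) ≤ ω^2 by positivity), abs_pow]
      norm_num
    rw [hq]
    calc ω^2* |t|^3/3 * |S| ≤ ω^2* |t|^3/3 * (2*(|ω| * |t|)) :=
          mul_le_mul_of_nonneg_left hSb (by positivity)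
    _ = 2/3* |ω|^3*t^4 := by
        rw [show (ω^2* |t|^3/3 * (2*(|ω| * |t|)) : ℝ) = 2/3*(ω^2* |ω|)*(|t|^4) from by ring, ht4]
        rw [show (ω^2 : ℝ) = |ω|^2 from by rw [← abs_pow]; exact (abs_of_nonneg (by positivity)).symm]
        ring
  have hbr : |t*(S - ω*t) - 2*(C - (1 + (ω*t)^2/2))/ω - ω^2*t^3/3*S| ≤ 4* |ω|^3*t^4 := by
    have h1 := abs_sub (t*(S - ω*t) - 2*(C - (1 + (ω*t)^2/2))/ω) (ω^2*t^3/3*S)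
    have h2 := abs_sub (t*(S - ω*t)) (2*(C - (1 + (ω*t)^2/2))/ω)
    have hpos : (0:ℝ) ≤ |ω|^3 * t^4 := by positivity
    linarith
  have b8 : |(β/ω)*(t*(S - ω*t) - 2*(C - (1 + (ω*t)^2/2))/ω - ω^2*t^3/3*S)|
      ≤ |β/ω| * 4 * |ω|^3 * t^4 := by
    rw [abs_mul]
    calc |β/ω| * |t*(S - ω*t) - 2*(C - (1 + (ω*t)^2/2))/ω - ω^2*t^3/3*S|
        ≤ |β/ω| * (4* |ω|^3*t^4) := mul_le_mul_of_nonneg_left hbr (abs_nonneg _)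
    _ = |β/ω| * 4 * |ω|^3 * t^4 := by ring
  have h1 := abs_add_le (t*(C - (1 + (ω*t)^2/2)) - (S - (ω*t + (ω*t)^3/6))/ω - ω^4*t^5/6
        - ω^2*t^3/3*(C - (1 + (ω*t)^2/2)))
      ((β/ω)*(t*(S - ω*t) - 2*(C - (1 + (ω*t)^2/2))/ω - ω^2*t^3/3*S))
  have h2 := abs_sub (t*(C - (1 + (ω*t)^2/2)) - (S - (ω*t + (ω*t)^3/6))/ω - ω^4*t^5/6)
      (ω^2*t^3/3*(C - (1 + (ω*t)^2/2)))
  have h3 := abs_sub (t*(C - (1 + (ω*t)^2/2)) - (S - (ω*t + (ω*t)^3/6))/ω) (ω^4*t^5/6)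
  have h4 := abs_sub (t*(C - (1 + (ω*t)^2/2))) ((S - (ω*t + (ω*t)^3/6))/ω)
  linarith



open Topology Asymptotics

/-- Delayed onset of decoherence at `p₀ = 0`, `δq = 0`:
`D(t) = (σ²η²/6)·t³ + O(t⁴)` as `t → 0`. -/
theorem stmt7 (σ γ g η : ℝ) (hσ : 0 < σ) (hγ : 0 < γ) (hg : 0 < g) (hη : η ≠ 0)
    (ω β : ℝ) (hω : ω = σ * γ * η) (hβ : β = 2 * σ ^ 2 / g)
    (v D : ℝ → ℝ)
    (hv : ∀ t, v t = Real.cosh (ω * t) + (β / ω) * Real.sinh (ω * t))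
    (hD : ∀ t, D t =
      (1 / (2 * γ ^ 2)) *
        ((t * v t - Real.sinh (ω * t) / ω - 2 * β * (Real.cosh (ω * t) - 1) / ω ^ 2) / v t)) :
    (fun t => D t - (σ ^ 2 * η ^ 2 / 6) * t ^ 3) =O[𝓝 (0:ℝ)] fun t => t ^ 4 := by
  have hγ0 : γ ≠ 0 := ne_of_gt hγ
  have hω0 : ω ≠ 0 := by
    rw [hω]; exact mul_ne_zero (mul_ne_zero (ne_of_gt hσ) hγ0) hη
  set K : ℝ := ω^4 + |ω|^3 + ω^4/6 + ω^6/3 + |β/ω| * 4 * |ω|^3 with hK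
  have hK0 : 0 ≤ K := by rw [hK]; positivity
  rw [Asymptotics.isBigO_iff]
  refine ⟨K / γ^2, ?_⟩
  have hδ : (0:ℝ) < min 1 (1/(|ω|+1)) := by positivity
  have ev1 : ∀ᶠ t in 𝓝 (0:ℝ), |t| < min 1 (1/(|ω|+1)) := by
    have := eventually_abs_sub_lt (0:ℝ) hδ
    simpa using this
  have ev2 : ∀ᶠ t in 𝓝 (0:ℝ), 1/2 < v t := by
    have hvfun : v = fun t => Real.cosh (ω * t) + (β / ω) * Real.sinh (ω * t) := funext hv
    have hcont : Continuous v := by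
      rw [hvfun]
      exact (Real.continuous_cosh.comp (continuous_const.mul continuous_id)).add
        (continuous_const.mul (Real.continuous_sinh.comp (continuous_const.mul continuous_id)))
    have hv0 : v 0 = 1 := by rw [hv]; simp
    have htend : Filter.Tendsto v (𝓝 0) (𝓝 1) := hv0 ▸ hcont.continuousAt
    exact htend.eventually (eventually_gt_nhds (by norm_num))
  filter_upwards [ev1, ev2] with t h1 h2
  obtain ⟨h1a, h1b⟩ := lt_min_iff.mp h1
  have ht1 : |t| ≤ 1 := le_of_lt h1a
  have hx1 : |ω*t| ≤ 1 := by
    rw [abs_mul]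
    have h3 : |ω| * |t| ≤ |ω| * (1/(|ω|+1)) := mul_le_mul_of_nonneg_left h1b.le (abs_nonneg ω)
    have h4 : |ω| * (1/(|ω|+1)) ≤ 1 := by
      rw [mul_one_div, div_le_one (by positivity)]
      linarith [abs_nonneg ω]
    linarith
  have hvpos : (0:ℝ) < v t := lt_trans (by norm_num) h2
  have hση : σ^2*η^2/6 = ω^2/(6*γ^2) := by rw [hω]; field_simp
  have key : D t - σ^2*η^2/6 * t^3 =
      1/(2*γ^2) * ((t * v t - Real.sinh (ω*t)/ω - 2*β*(Real.cosh (ω*t)-1)/ω^2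
        - ω^2*t^3/3 * v t) / v t) := by
    rw [hD t, hση]
    field_simp
    ring
  rw [key]
  have hE := E_bound ω β t hω0 hx1 ht1
  rw [← hv t] at hE
  have ht40 : (0:ℝ) ≤ t^4 := by positivity
  have habs1 : |1/(2*γ^2)| = 1/(2*γ^2) := abs_of_pos (by positivity)
  have habs2 : |(t * v t - Real.sinh (ω*t)/ω - 2*β*(Real.cosh (ω*t)-1)/ω^2
      - ω^2*t^3/3 * v t) / v t| = |t * v t - Real.sinh (ω*t)/ω
      - 2*β*(Real.cosh (ω*t)-1)/ω^2 - ω^2*t^3/3 * v t| / v t := by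
    rw [abs_div, abs_of_pos hvpos]
  rw [Real.norm_eq_abs, Real.norm_eq_abs, abs_mul, habs1, habs2, abs_of_nonneg ht40]
  have hdiv : |t * v t - Real.sinh (ω*t)/ω - 2*β*(Real.cosh (ω*t)-1)/ω^2
      - ω^2*t^3/3 * v t| / v t ≤ 2 * (K * t^4) := by
    rw [div_le_iff₀ hvpos]
    rw [← hK] at hE
    have hm : K*t^4*(1/2) ≤ K*t^4*(v t) :=
      mul_le_mul_of_nonneg_left (le_of_lt h2) (mul_nonneg hK0 ht40)
    nlinarith
  calc 1/(2*γ^2) * (|t * v t - Real.sinh (ω*t)/ω - 2*β*(Real.cosh (ω*t)-1)/ω^2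
      - ω^2*t^3/3 * v t| / v t) ≤ 1/(2*γ^2) * (2 * (K * t^4)) :=
        mul_le_mul_of_nonneg_left hdiv (by positivity)
  _ = K / γ^2 * t^4 := by field_simp
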